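/- Let A be a commutative ℚ-algebra, let ℏ ∈ A be a unit, let z ∈ A be nilpotent, let c : Fin n → A, and set p := ∏_{i} (z − c i). Assume z · p = 0. Then for every integer m ≥ 1 the element z + m·ℏ is a unit in A, and in the formal power series ring A[[q]] one has the identity p · ∑_{d ≥ 0} (∏_{m=1}^{d} (z + m·ℏ))⁻¹ q^d = p · ∑_{d ≥ 0} (d!·ℏ^d)⁻¹ q^d. -/

import Mathlib

/-- Core computation in the consistency check with the Quantum Hyperplane Section
Principle: with `ℏ` a unit, `z` nilpotent and `z · ∏ᵢ (z − cᵢ) = 0`, each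
`z + mℏ` (`m ≥ 1`) is a unit, and modulo multiplication by `p = ∏ᵢ (z − cᵢ)`
the series `∑_d q^d / ∏_{m=1}^d (z + mℏ)` collapses to
`∑_d q^d / (d! ℏ^d)`, i.e. to `exp(q/ℏ)`. -/
theorem stmt3 (A : Type*) [CommRing A] [Algebra ℚ A] (ℏ : A) (hℏ : IsUnit ℏ)
    (z : A) (hz : IsNilpotent z) (n : ℕ) (c : Fin n → A)
    (p : A) (hp : p = ∏ i, (z - c i)) (hzp : z * p = 0) :
    (∀ m : ℤ, 1 ≤ m → IsUnit (z + (m : A) * ℏ)) ∧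
      (PowerSeries.C (R := A) p) *
          PowerSeries.mk (fun d =>
            Ring.inverse (∏ m ∈ Finset.Icc 1 d, (z + (m : A) * ℏ))) =
        (PowerSeries.C (R := A) p) *
          PowerSeries.mk (fun d => Ring.inverse ((d.factorial : A) * ℏ ^ d)) := by
  have hcast : ∀ m : ℤ, m ≠ 0 → IsUnit ((m : A)) := by
    intro m hm
    rw [← map_intCast (algebraMap ℚ A) m]
    exact (isUnit_iff_ne_zero.mpr (by exact_mod_cast hm : (m : ℚ) ≠ 0)).map (algebraMap ℚ A)
  have hunit : ∀ m : ℤ, 1 ≤ m → IsUnit (z + (m : A) * ℏ) := by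
    intro m hm
    have hu : IsUnit ((m : A) * ℏ) := (hcast m (by omega)).mul hℏ
    exact hz.isUnit_add_right_of_commute hu (Commute.all _ _)
  refine ⟨hunit, ?_⟩
  have hnat : ∀ m : ℕ, 1 ≤ m → IsUnit (z + (m : A) * ℏ) := by
    intro m hm
    have := hunit (m : ℤ) (by exact_mod_cast hm)
    simpa using this
  ext d
  rw [PowerSeries.coeff_C_mul, PowerSeries.coeff_C_mul, PowerSeries.coeff_mk,
    PowerSeries.coeff_mk]
  -- key: p * ∏ (z + mℏ) = p * ∏ (mℏ)
  have key : ∀ s : Finset ℕ, p * ∏ m ∈ s, (z + (m : A) * ℏ) = p * ∏ m ∈ s, ((m : A) * ℏ) := by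
    intro s
    induction s using Finset.induction with
    | empty => simp
    | @insert a s hx ih =>
      rw [Finset.prod_insert hx, Finset.prod_insert hx]
      have h1 : p * (z + (a : A) * ℏ) = p * ((a : A) * ℏ) := by
        linear_combination hzp
      calc p * ((z + (a : A) * ℏ) * ∏ m ∈ s, (z + (m : A) * ℏ))
          = (p * (z + (a : A) * ℏ)) * ∏ m ∈ s, (z + (m : A) * ℏ) := by ring
        _ = (p * ((a : A) * ℏ)) * ∏ m ∈ s, (z + (m : A) * ℏ) := by rw [h1]
        _ = ((a : A) * ℏ) * (p * ∏ m ∈ s, (z + (m : A) * ℏ)) := by ring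
        _ = ((a : A) * ℏ) * (p * ∏ m ∈ s, ((m : A) * ℏ)) := by rw [ih]
        _ = p * (((a : A) * ℏ) * ∏ m ∈ s, ((m : A) * ℏ)) := by ring
  have hu : IsUnit (∏ m ∈ Finset.Icc 1 d, (z + (m : A) * ℏ)) := by
    exact Finset.prod_induction _ IsUnit (fun a b ha hb => ha.mul hb) isUnit_one
      (fun m hm => hnat m (Finset.mem_Icc.mp hm).1)
  have hfac : (∏ m ∈ Finset.Icc 1 d, ((m : A) * ℏ)) = (d.factorial : A) * ℏ ^ d := by
    rw [Finset.prod_mul_distrib, Finset.prod_const]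
    congr 1
    · rw [← Nat.cast_prod]
      congr 1
      rw [← Finset.Ico_add_one_right_eq_Icc, Finset.prod_Ico_id_eq_factorial]
    · simp [Nat.card_Icc]
  have hv : IsUnit ((d.factorial : A) * ℏ ^ d) := by
    refine IsUnit.mul ?_ (hℏ.pow d)
    rw [← map_natCast (algebraMap ℚ A) d.factorial]
    exact (isUnit_iff_ne_zero.mpr (by exact_mod_cast d.factorial_ne_zero)).map (algebraMap ℚ A)
  have hpv : p * ∏ m ∈ Finset.Icc 1 d, (z + (m : A) * ℏ) = p * ((d.factorial : A) * ℏ ^ d) := by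
    rw [key, hfac]
  calc p * Ring.inverse (∏ m ∈ Finset.Icc 1 d, (z + (m : A) * ℏ))
      = (p * ((d.factorial : A) * ℏ ^ d) * Ring.inverse ((d.factorial : A) * ℏ ^ d))
          * Ring.inverse (∏ m ∈ Finset.Icc 1 d, (z + (m : A) * ℏ)) := by
        rw [mul_assoc p, Ring.mul_inverse_cancel _ hv, mul_one]
    _ = (p * ∏ m ∈ Finset.Icc 1 d, (z + (m : A) * ℏ))
          * Ring.inverse (∏ m ∈ Finset.Icc 1 d, (z + (m : A) * ℏ))
          * Ring.inverse ((d.factorial : A) * ℏ ^ d) := by rw [hpv]; ring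
    _ = p * Ring.inverse ((d.factorial : A) * ℏ ^ d) := by
        rw [mul_assoc p, Ring.mul_inverse_cancel _ hu, mul_one]
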